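/- arXiv:2501.01358 — 2 statements merged into one kernel-verified Lean document; each statement's English description precedes it below -/
import Mathlib

section
/- Let n ≥ 2, a ∈ ℝ, A ∈ ℝ, B ∈ ℝ, and define v(x) = xₙ^a (|x′|² + A) − B·xₙ for x = (x′, xₙ) ∈ ℝⁿ with xₙ > 0. Then for every x with xₙ > 0, the determinant of the Hessian of v satisfies det D²v(x) = 2^{n−1} a · xₙ^{na−2} · [A(a − 1) − (a + 1)|x′|²]. -/
open Metric MeasureTheory Real

/-- The Hessian matrix of `u : ℝⁿ → ℝ` at `x`, with entries the second partial
derivatives `∂²u/∂xᵢ∂xⱼ` computed via iterated Fréchet derivatives. -/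
noncomputable def hessianMatrix {n : ℕ} (u : EuclideanSpace ℝ (Fin n) → ℝ)
    (x : EuclideanSpace ℝ (Fin n)) : Matrix (Fin n) (Fin n) ℝ :=
  Matrix.of fun i j =>
    fderiv ℝ (fun y => fderiv ℝ u y (EuclideanSpace.single j 1)) x (EuclideanSpace.single i 1)

/-- The determinant of the Hessian matrix, `det D²u(x)`. -/
noncomputable def hessianDet {n : ℕ} (u : EuclideanSpace ℝ (Fin n) → ℝ)
    (x : EuclideanSpace ℝ (Fin n)) : ℝ := (hessianMatrix u x).det

lemma det_arrowhead (m : ℕ) (c d : ℝ) (u : Fin (m+1) → ℝ) (hc : c ≠ 0)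
    (M : Matrix (Fin (m+1)) (Fin (m+1)) ℝ)
    (hM : ∀ i j, M i j =
      if i = Fin.last m then (if j = Fin.last m then d else u j)
      else if j = Fin.last m then u i
      else if i = j then c else 0) :
    M.det = c ^ m * (d - c⁻¹ * ∑ i ∈ Finset.univ.erase (Fin.last m), u i ^ 2) := by
  have hlast : ∀ i : Fin m, Fin.castAdd 1 i ≠ Fin.last m := by
    intro i h
    have := congrArg Fin.val h
    simp [Fin.last] at this
    omega
  have hsub : M.submatrix finSumFinEquiv finSumFinEquiv =
      Matrix.fromBlocks (c • (1 : Matrix (Fin m) (Fin m) ℝ))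
        (Matrix.of fun i (_ : Fin 1) => u (Fin.castAdd 1 i))
        (Matrix.of fun (_ : Fin 1) j => u (Fin.castAdd 1 j))
        (Matrix.of fun _ _ => d) := by
    ext i j
    rcases i with i | i <;> rcases j with j | j
    · simp only [Matrix.submatrix_apply, finSumFinEquiv_apply_left, hM,
        if_neg (hlast i), if_neg (hlast j), Matrix.fromBlocks_apply₁₁,
        Matrix.smul_apply, Matrix.one_apply, smul_eq_mul]
      by_cases h : i = j
      · simp [h]
      · rw [if_neg (fun hh => h (by simpa [Fin.ext_iff] using hh)), if_neg h, mul_zero]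
    · simp only [Matrix.submatrix_apply, finSumFinEquiv_apply_left,
        finSumFinEquiv_apply_right, hM, if_neg (hlast i), Matrix.fromBlocks_apply₁₂,
        Matrix.of_apply]
      rw [if_pos]
      ext; simp [Fin.last, Fin.eq_zero j]
    · simp only [Matrix.submatrix_apply, finSumFinEquiv_apply_left,
        finSumFinEquiv_apply_right, hM, if_neg (hlast j), Matrix.fromBlocks_apply₂₁,
        Matrix.of_apply]
      rw [if_pos]
      ext; simp [Fin.last, Fin.eq_zero i]
    · simp only [Matrix.submatrix_apply, finSumFinEquiv_apply_right, hM,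
        Matrix.fromBlocks_apply₂₂, Matrix.of_apply]
      rw [if_pos, if_pos] <;> (ext; simp [Fin.last, Fin.eq_zero i, Fin.eq_zero j])
  letI : Invertible (c • (1 : Matrix (Fin m) (Fin m) ℝ)) :=
    ⟨c⁻¹ • 1, by simp [smul_smul, inv_mul_cancel₀ hc, mul_inv_cancel₀ hc],
      by simp [smul_smul, inv_mul_cancel₀ hc, mul_inv_cancel₀ hc]⟩
  have hinv : ⅟(c • (1 : Matrix (Fin m) (Fin m) ℝ)) = c⁻¹ • 1 := rfl
  rw [← Matrix.det_submatrix_equiv_self finSumFinEquiv, hsub,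
    Matrix.det_fromBlocks₁₁, hinv]
  have h1 : (c • (1 : Matrix (Fin m) (Fin m) ℝ)).det = c ^ m := by
    simp [Matrix.det_smul]
  rw [h1]
  rw [Matrix.det_unique]
  have hsum : ∑ i ∈ Finset.univ.erase (Fin.last m), u i ^ 2
      = ∑ i : Fin m, u (Fin.castAdd 1 i) ^ 2 := by
    rw [Finset.sum_erase_eq_sub (Finset.mem_univ _), Fin.sum_univ_castSucc]
    simp [Fin.castSucc]
  rw [hsum]
  simp only [Matrix.sub_apply, Matrix.mul_apply, Matrix.smul_apply, Matrix.one_apply,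
    Matrix.of_apply, smul_eq_mul, Finset.mul_sum]
  congr 1
  · congr 1
    refine Finset.sum_congr rfl fun k _ => ?_
    simp [Finset.mul_sum]
    ring

/-- Explicit Hessian determinant of `v(x) = xₙ^a (|x'|² + A) - B xₙ`
on the open upper half-space. -/
theorem stmt_9 (n : ℕ) (hn : 2 ≤ n) (a A B : ℝ)
    (v : EuclideanSpace ℝ (Fin n) → ℝ)
    (hv : v = fun x => x ⟨n - 1, by omega⟩ ^ a *
        ((∑ i ∈ Finset.univ.erase (⟨n - 1, by omega⟩ : Fin n), x i ^ 2) + A) -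
        B * x ⟨n - 1, by omega⟩) :
    ∀ x : EuclideanSpace ℝ (Fin n), 0 < x ⟨n - 1, by omega⟩ →
      hessianDet v x = (2 : ℝ) ^ (n - 1) * a * x ⟨n - 1, by omega⟩ ^ ((n : ℝ) * a - 2) *
        (A * (a - 1) - (a + 1) *
          ∑ i ∈ Finset.univ.erase (⟨n - 1, by omega⟩ : Fin n), x i ^ 2) := by
  obtain ⟨m, rfl⟩ : ∃ m, n = m + 1 := ⟨n - 1, by omega⟩
  have hNix : (⟨m + 1 - 1, by omega⟩ : Fin (m + 1)) = Fin.last m := by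
    ext; simp
  set N : Fin (m + 1) := Fin.last m with hNdef
  simp only [hNix, Nat.add_sub_cancel] at hv
  intro x hx0
  have hx : 0 < x N := hx0
  suffices h : hessianDet v x = (2 : ℝ) ^ m * a * x N ^ (((m + 1 : ℕ) : ℝ) * a - 2) *
      (A * (a - 1) - (a + 1) * ∑ i ∈ Finset.univ.erase N, x i ^ 2) by exact h
  have hv' : v = fun y : EuclideanSpace ℝ (Fin (m + 1)) => y N ^ a *
      ((∑ i ∈ Finset.univ.erase N, y i ^ 2) + A) - B * y N := hv
  clear hv
  have hcoord : ∀ (y : EuclideanSpace ℝ (Fin (m + 1))) (i : Fin (m + 1)),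
      HasFDerivAt (fun z : EuclideanSpace ℝ (Fin (m + 1)) => (z i : ℝ))
        (EuclideanSpace.proj (𝕜 := ℝ) i) y :=
    fun y i => (EuclideanSpace.proj (𝕜 := ℝ) i).hasFDerivAt
  have hS : ∀ y : EuclideanSpace ℝ (Fin (m + 1)), HasFDerivAt (fun z : EuclideanSpace ℝ (Fin (m + 1)) => ∑ i ∈ Finset.univ.erase N, z i ^ 2)
      (∑ i ∈ Finset.univ.erase N, (2 * y i) • EuclideanSpace.proj (𝕜 := ℝ) i) y := by
    intro y
    refine HasFDerivAt.fun_sum fun i _ => ?_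
    exact (by simpa using hasDerivAt_pow 2 (y i) :
      HasDerivAt (fun t : ℝ => t ^ 2) (2 * y i) (y i)).comp_hasFDerivAt y (hcoord y i)
  have hpow : ∀ (y : EuclideanSpace ℝ (Fin (m + 1))) (b : ℝ), 0 < y N → HasFDerivAt (fun z : EuclideanSpace ℝ (Fin (m + 1)) => z N ^ b)
      ((b * y N ^ (b - 1)) • EuclideanSpace.proj (𝕜 := ℝ) N) y := by
    intro y b hy
    exact (Real.hasDerivAt_rpow_const (x := y N) (p := b)
      (Or.inl hy.ne')).comp_hasFDerivAt y (hcoord y N)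
  -- first derivatives
  have hD1 : ∀ y : EuclideanSpace ℝ (Fin (m + 1)), 0 < y N → ∀ j,
      fderiv ℝ v y (EuclideanSpace.single j 1) =
        if j = N then a * y N ^ (a - 1) *
          ((∑ i ∈ Finset.univ.erase N, y i ^ 2) + A) - B
        else 2 * y N ^ a * y j := by
    intro y hy j
    have hv2 : HasFDerivAt v
        ((y N ^ a) • (∑ i ∈ Finset.univ.erase N, (2 * y i) • EuclideanSpace.proj (𝕜 := ℝ) i)
          + ((∑ i ∈ Finset.univ.erase N, y i ^ 2) + A) •
              ((a * y N ^ (a - 1)) • EuclideanSpace.proj (𝕜 := ℝ) N)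
          - B • EuclideanSpace.proj (𝕜 := ℝ) N) y := by
      rw [hv']
      exact ((hpow y a hy).mul ((hS y).add_const A)).sub ((hcoord y N).const_mul B)
    rw [hv2.fderiv]
    simp only [ContinuousLinearMap.coe_sub', ContinuousLinearMap.coe_add', Pi.sub_apply,
      Pi.add_apply, ContinuousLinearMap.coe_smul', Pi.smul_apply,
      ContinuousLinearMap.coe_sum', Finset.sum_apply,
      PiLp.proj_apply, EuclideanSpace.single_apply, smul_eq_mul]
    by_cases hj : j = N
    · subst hj
      rw [if_pos rfl]
      rw [Finset.sum_eq_zero (fun i hi => by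
        rw [if_neg (Finset.ne_of_mem_erase hi)]; ring)]
      simp
      ring
    · rw [if_neg hj, if_neg (fun h => hj h.symm)]
      rw [Finset.sum_eq_single j (fun i _ hij => by rw [if_neg hij, mul_zero])
        (fun hmem => absurd (Finset.mem_erase.mpr ⟨hj, Finset.mem_univ j⟩) hmem)]
      simp
      ring
  -- openness
  have hU : IsOpen {y : EuclideanSpace ℝ (Fin (m + 1)) | 0 < y N} :=
    isOpen_lt continuous_const (EuclideanSpace.proj (𝕜 := ℝ) N).continuous
  have hmem : {y : EuclideanSpace ℝ (Fin (m + 1)) | 0 < y N} ∈ nhds x := hU.mem_nhds hx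
  -- abbreviations
  set S : ℝ := ∑ i ∈ Finset.univ.erase N, x i ^ 2 with hSdef
  -- Hessian entries
  have hentry : ∀ i j : Fin (m + 1), hessianMatrix v x i j =
      if i = N then (if j = N then a * (a - 1) * x N ^ (a - 2) * (S + A)
        else 2 * a * x N ^ (a - 1) * x j)
      else if j = N then 2 * a * x N ^ (a - 1) * x i
      else if i = j then 2 * x N ^ a else 0 := by
    intro i j
    have hentry0 : hessianMatrix v x i j =
        fderiv ℝ (fun y => fderiv ℝ v y (EuclideanSpace.single j 1)) x
          (EuclideanSpace.single i 1) := rfl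
    by_cases hj : j = N
    · subst hj
      have hev : (fun y : EuclideanSpace ℝ (Fin (m + 1)) => fderiv ℝ v y (EuclideanSpace.single N 1)) =ᶠ[nhds x]
          (fun y : EuclideanSpace ℝ (Fin (m + 1)) => a * y N ^ (a - 1) *
            ((∑ i ∈ Finset.univ.erase N, y i ^ 2) + A) - B) := by
        filter_upwards [hmem] with y hy
        rw [hD1 y hy, if_pos rfl]
      have hpow' : HasFDerivAt (fun z : EuclideanSpace ℝ (Fin (m + 1)) => z N ^ (a - 1))
          (((a - 1) * x N ^ (a - 1 - 1)) • EuclideanSpace.proj (𝕜 := ℝ) N) x :=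
        hpow x (a - 1) hx
      have hg := (((hpow').const_mul a).fun_mul ((hS x).add_const A)).sub_const B
      rw [hentry0, hev.fderiv_eq, hg.fderiv]
      simp only [ContinuousLinearMap.coe_sub', ContinuousLinearMap.coe_add', Pi.sub_apply,
        Pi.add_apply, ContinuousLinearMap.coe_smul', Pi.smul_apply,
        ContinuousLinearMap.coe_sum', Finset.sum_apply,
        PiLp.proj_apply, EuclideanSpace.single_apply, smul_eq_mul]
      by_cases hi : i = N
      · subst hi
        rw [Finset.sum_eq_zero (fun k hk => by
          rw [if_neg (Finset.ne_of_mem_erase hk)]; ring)]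
        have he : a - 1 - 1 = a - 2 := by ring
        simp [he, ← hSdef]
        ring
      · have h1 : N ≠ i := fun h => hi h.symm
        rw [Finset.sum_eq_single i (fun k _ hk => by rw [if_neg hk, mul_zero])
          (fun hmemi => absurd (Finset.mem_erase.mpr ⟨hi, Finset.mem_univ i⟩) hmemi)]
        simp [hi, h1]
        ring
    · have hev : (fun y : EuclideanSpace ℝ (Fin (m + 1)) => fderiv ℝ v y (EuclideanSpace.single j 1)) =ᶠ[nhds x]
          (fun y : EuclideanSpace ℝ (Fin (m + 1)) => 2 * y N ^ a * y j) := by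
        filter_upwards [hmem] with y hy
        rw [hD1 y hy, if_neg hj]
      have hg := ((hpow x a hx).const_mul 2).fun_mul (hcoord x j)
      rw [hentry0, hev.fderiv_eq, hg.fderiv]
      simp only [ContinuousLinearMap.coe_add', Pi.add_apply,
        ContinuousLinearMap.coe_smul', Pi.smul_apply,
        PiLp.proj_apply, EuclideanSpace.single_apply, smul_eq_mul]
      by_cases hi : i = N
      · subst hi
        have h2 : j ≠ N := hj
        simp [h2]
        ring
      · have h1 : N ≠ i := fun h => hi h.symm
        by_cases hij : i = j
        · subst hij
          simp [hi, hj, h1]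
        · have h3 : j ≠ i := fun h => hij h.symm
          simp [hi, hj, h1, hij, h3]
  -- determinant
  have ht : (0:ℝ) < x N := hx
  have htne : x N ≠ 0 := ht.ne'
  have hcne : (2 : ℝ) * x N ^ a ≠ 0 := by
    have := Real.rpow_pos_of_pos ht a
    positivity
  have hdet := det_arrowhead m (2 * x N ^ a)
    (a * (a - 1) * x N ^ (a - 2) * (S + A))
    (fun i => 2 * a * x N ^ (a - 1) * x i) hcne (hessianMatrix v x) (by
      intro i j
      exact hentry i j)
  rw [hessianDet, hdet]
  -- final algebra
  set t : ℝ := x N with htdef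
  have hsum2 : ∑ i ∈ Finset.univ.erase N, (2 * a * t ^ (a - 1) * x i) ^ 2
      = (2 * a * t ^ (a - 1)) ^ 2 * S := by
    rw [hSdef, Finset.mul_sum]
    exact Finset.sum_congr rfl fun i _ => by ring
  rw [hsum2]
  have hu1 : t ^ a = t ^ (a - 2) * t ^ (2:ℕ) := by
    rw [← Real.rpow_natCast t 2, ← Real.rpow_add ht,
      show a - 2 + ((2:ℕ):ℝ) = a by push_cast; ring]
  have hu2 : t ^ (a - 1) = t ^ (a - 2) * t := by
    rw [show a - 1 = (a - 2) + 1 by ring, Real.rpow_add ht, Real.rpow_one]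
  have hu3 : t ^ (((m + 1 : ℕ) : ℝ) * a - 2)
      = (t ^ (a - 2)) ^ (m + 1) * t ^ (2 * m) := by
    rw [show ((m + 1 : ℕ) : ℝ) * a - 2 = (a - 2) * ((m + 1 : ℕ) : ℝ) + ((2 * m : ℕ) : ℝ)
        by push_cast; ring,
      Real.rpow_add ht, Real.rpow_natCast, Real.rpow_mul ht.le, Real.rpow_natCast]
  have hune : t ^ (a - 2) ≠ 0 := (Real.rpow_pos_of_pos ht _).ne'
  rw [hu1, hu2, hu3]
  field_simp
  ring
end

section
/- Let Ω ⊂ ℝⁿ (n ≥ 1) be a bounded open set, and let v, w be continuous on the closure of Ω and twice continuously differentiable in Ω. Assume v is convex in Ω, det D²v(x) > det D²w(x) for all x ∈ Ω, and v ≤ w on ∂Ω. Then v ≤ w on the closure of Ω. -/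
open Metric MeasureTheory Real
open Matrix

section Aux
open Matrix

variable {m : ℕ}

lemma psd_det_nonneg {A : Matrix (Fin m) (Fin m) ℝ} (hA : A.PosSemidef) : 0 ≤ A.det := by
  rw [hA.isHermitian.det_eq_prod_eigenvalues]
  exact Finset.prod_nonneg fun i _ => by simpa using hA.eigenvalues_nonneg i

lemma one_le_eigenvalues {N : Matrix (Fin m) (Fin m) ℝ} (hN : N.IsHermitian)
    (h : (N - 1).PosSemidef) (i : Fin m) : 1 ≤ hN.eigenvalues i := by
  have hv := hN.eigenvalues_eq i
  set v := ⇑(hN.eigenvectorBasis i) with hvdef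
  have h1 : (inner ℝ (hN.eigenvectorBasis i) (hN.eigenvectorBasis i) : ℝ) = 1 := by
    have hno := hN.eigenvectorBasis.orthonormal.1 i
    rw [real_inner_self_eq_norm_mul_norm, hno]; norm_num
  have hnorm : dotProduct v v = 1 := by
    rw [EuclideanSpace.inner_eq_star_dotProduct] at h1
    simpa using h1
  have h2 := h.dotProduct_mulVec_nonneg v
  rw [sub_mulVec, dotProduct_sub, one_mulVec] at h2
  simp only [RCLike.re_to_real] at h2 hv
  have hstar : star v = v := rfl
  rw [hstar] at h2 hv
  linarith

lemma one_le_det_of_sub_one_posSemidef {N : Matrix (Fin m) (Fin m) ℝ}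
    (hN : N.IsHermitian) (h : (N - 1).PosSemidef) : 1 ≤ N.det := by
  rw [hN.det_eq_prod_eigenvalues]
  calc (1:ℝ) = ∏ _i : Fin m, 1 := by simp
  _ ≤ ∏ i, hN.eigenvalues i := Finset.prod_le_prod (by simp) (by
      intro i _; simpa using one_le_eigenvalues hN h i)

/-- Monotonicity of determinant: if `A` is PSD and `C` is PSD then `det A ≤ det (A + C)`. -/
lemma det_le_det_add {A C : Matrix (Fin m) (Fin m) ℝ}
    (hA : A.PosSemidef) (hC : C.PosSemidef) : A.det ≤ (A + C).det := by
  rcases le_or_gt A.det 0 with h0 | hpos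
  · exact le_trans h0 (psd_det_nonneg (hA.add hC))
  · open scoped MatrixOrder in
    set S := CFC.sqrt A with hS
    open scoped MatrixOrder in
    have hSps : S.PosSemidef := (CFC.sqrt_nonneg A).posSemidef
    open scoped MatrixOrder in
    have hSmul : S * S = A := CFC.sqrt_mul_sqrt_self A hA.nonneg
    have hSdet : S.det ≠ 0 := by
      intro h
      rw [← hSmul, det_mul, h, mul_zero] at hpos
      exact lt_irrefl _ hpos
    have hSunit : IsUnit S.det := isUnit_iff_ne_zero.2 hSdet
    have hSinvH : (S⁻¹).IsHermitian := hSps.isHermitian.inv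
    set M := S⁻¹ * C * S⁻¹ with hM
    have hMps : M.PosSemidef := by
      have := hC.conjTranspose_mul_mul_same (B := S⁻¹)
      rwa [hSinvH.eq] at this
    have key : A + C = S * (1 + M) * S := by
      rw [mul_add, add_mul, mul_one, hSmul, hM]
      congr 1
      rw [mul_assoc S⁻¹ C S⁻¹, Matrix.mul_nonsing_inv_cancel_left _ _ hSunit,
        Matrix.nonsing_inv_mul_cancel_right _ _ hSunit]
    have h1M : (1 + M).IsHermitian := isHermitian_one.add hMps.isHermitian
    have hdet1M : 1 ≤ (1 + M).det :=
      one_le_det_of_sub_one_posSemidef h1M (by simpa using hMps)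
    rw [key, det_mul, det_mul]
    calc A.det = S.det * 1 * S.det := by rw [mul_one, ← det_mul, hSmul]
    _ ≤ S.det * (1 + M).det * S.det := by
        nlinarith [mul_nonneg (mul_self_nonneg S.det) (sub_nonneg.2 hdet1M)]


variable {n : ℕ} {s : Set (EuclideanSpace ℝ (Fin n))} {u : EuclideanSpace ℝ (Fin n) → ℝ}
  {x : EuclideanSpace ℝ (Fin n)}

section basic

lemma hasFDerivAt_of_c2 (hs : IsOpen s) (hu : ContDiffOn ℝ 2 u s) {y} (hy : y ∈ s) :
    HasFDerivAt u (fderiv ℝ u y) y :=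
  ((hu.differentiableOn (by norm_num) y hy).differentiableAt (hs.mem_nhds hy)).hasFDerivAt

lemma hasFDerivAt_fderiv_of_c2 (hs : IsOpen s) (hu : ContDiffOn ℝ 2 u s) {y} (hy : y ∈ s) :
    HasFDerivAt (fderiv ℝ u) (fderiv ℝ (fun z => fderiv ℝ u z) y) y := by
  have h1 : ContDiffOn ℝ 1 (fderiv ℝ u) s := hu.fderiv_of_isOpen hs (by norm_num)
  exact ((h1.differentiableOn (by norm_num) y hy).differentiableAt (hs.mem_nhds hy)).hasFDerivAt

lemma fderiv_apply_const {B : EuclideanSpace ℝ (Fin n) →L[ℝ] EuclideanSpace ℝ (Fin n) →L[ℝ] ℝ} (hB : HasFDerivAt (fderiv ℝ u) B x)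
    (z e : EuclideanSpace ℝ (Fin n)) :
    fderiv ℝ (fun y => fderiv ℝ u y z) x e = B e z := by
  have : HasFDerivAt (fun y => fderiv ℝ u y z)
      ((ContinuousLinearMap.apply ℝ ℝ z).comp B) x :=
    (ContinuousLinearMap.apply ℝ ℝ z).hasFDerivAt.comp x hB
  rw [this.fderiv]; rfl

lemma hessian_entry {B : EuclideanSpace ℝ (Fin n) →L[ℝ] EuclideanSpace ℝ (Fin n) →L[ℝ] ℝ} (hB : HasFDerivAt (fderiv ℝ u) B x) (i j : Fin n) :
    hessianMatrix u x i j = B (EuclideanSpace.single i 1) (EuclideanSpace.single j 1) :=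
  fderiv_apply_const hB _ _

lemma euclidean_decomp (e : EuclideanSpace ℝ (Fin n)) :
    e = ∑ i, e i • EuclideanSpace.single i (1:ℝ) := by
  conv_lhs => rw [← (EuclideanSpace.basisFun (Fin n) ℝ).sum_repr e]
  simp [EuclideanSpace.basisFun_apply, EuclideanSpace.basisFun_repr]

lemma quad_eq {B : EuclideanSpace ℝ (Fin n) →L[ℝ] EuclideanSpace ℝ (Fin n) →L[ℝ] ℝ}
    (hB : HasFDerivAt (fderiv ℝ u) B x) (e : EuclideanSpace ℝ (Fin n)) :
    dotProduct (fun i => e i) ((hessianMatrix u x) *ᵥ (fun i => e i)) = B e e := by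
  conv_rhs => rw [euclidean_decomp e]
  simp only [map_sum, _root_.map_smul, ContinuousLinearMap.coe_sum',
    ContinuousLinearMap.coe_smul', Finset.sum_apply, Pi.smul_apply, smul_eq_mul]
  simp only [dotProduct, Matrix.mulVec, Finset.mul_sum]
  rw [Finset.sum_comm]
  refine Finset.sum_congr rfl fun i _ => Finset.sum_congr rfl fun j _ => ?_
  rw [hessian_entry hB j i]
  ring
end basic

section maxtest

lemma quad_nonpos_of_isMaxOn (hs : IsOpen s) (hu : ContDiffOn ℝ 2 u s)
    (hx : x ∈ s) (hmax : IsMaxOn u s x) (e : EuclideanSpace ℝ (Fin n)) :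
    fderiv ℝ (fun z => fderiv ℝ u z) x e e ≤ 0 := by
  set B := fderiv ℝ (fun z => fderiv ℝ u z) x with hBdef
  by_contra hK
  push_neg at hK
  set c : ℝ → EuclideanSpace ℝ (Fin n) := fun t => x + t • e with hc
  have hcc : Continuous c := by
    exact continuous_const.add (continuous_id.smul continuous_const)
  have hcd : ∀ t : ℝ, HasDerivAt c e t := by
    intro t
    simpa [hc] using ((hasDerivAt_id t).smul_const e).const_add x
  have hc0 : c 0 = x := by simp [hc]
  set s' : Set ℝ := c ⁻¹' s with hs'
  have hs'o : IsOpen s' := hs.preimage hcc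
  have h0s' : (0:ℝ) ∈ s' := by simp [hs', hc0, hx]
  set g : ℝ → ℝ := fun t => u (c t) with hg
  set h : ℝ → ℝ := fun t => fderiv ℝ u (c t) e with hh
  -- derivative of g on s'
  have hgd : ∀ t ∈ s', HasDerivAt g (h t) t := fun t ht =>
    (hasFDerivAt_of_c2 hs hu ht).comp_hasDerivAt t (hcd t)
  -- derivative of h at 0
  have hhd : HasDerivAt h (B e e) 0 := by
    have h1 : HasFDerivAt (fderiv ℝ u) B x := hasFDerivAt_fderiv_of_c2 hs hu hx
    have h2 : HasDerivAt (fun t => fderiv ℝ u (c t)) (B e) 0 := by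
      have h1' : HasFDerivAt (fderiv ℝ u) B (c 0) := by rw [hc0]; exact h1
      exact h1'.comp_hasDerivAt 0 (hcd 0)
    exact ((ContinuousLinearMap.apply ℝ ℝ e).hasFDerivAt.comp_hasDerivAt 0 h2)
  -- local max of g at 0
  have hgmax : IsLocalMax g 0 := by
    have : ∀ᶠ t in nhds (0:ℝ), c t ∈ s := by
      have := hs'o.mem_nhds h0s'
      exact this
    filter_upwards [this] with t ht
    simpa [hg, hc0] using hmax ht
  have hh0 : h 0 = 0 := hgmax.hasDerivAt_eq_zero (hgd 0 h0s')
  -- h is positive just right of 0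
  have hslope : Filter.Tendsto (slope h 0) (nhdsWithin 0 (Set.Ioi 0)) (nhds (B e e)) :=
    (hasDerivAt_iff_tendsto_slope.1 hhd).mono_left
      (nhdsWithin_mono 0 fun t ht => Set.mem_compl_singleton_iff.2 (ne_of_gt ht))
  have hpos : ∀ᶠ t in nhdsWithin 0 (Set.Ioi 0), 0 < h t := by
    filter_upwards [hslope.eventually (eventually_gt_nhds hK),
      self_mem_nhdsWithin] with t hst (htpos : 0 < t)
    have hsl : slope h 0 t = t⁻¹ * h t := by simp [slope, hh0]
    rw [hsl] at hst
    have h3 : 0 < t * (t⁻¹ * h t) := mul_pos htpos hst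
    rwa [mul_inv_cancel_left₀ (ne_of_gt htpos)] at h3
  obtain ⟨δ₁, hδ₁pos, hδ₁⟩ : ∃ δ > (0:ℝ), ∀ t ∈ Set.Ioo 0 δ, 0 < h t := by
    rcases mem_nhdsGT_iff_exists_Ioo_subset.1 hpos with ⟨δ, hδ, hsub⟩
    exact ⟨δ, hδ, fun t ht => hsub ht⟩
  obtain ⟨ε, hεpos, hε⟩ := Metric.isOpen_iff.1 hs'o 0 h0s'
  obtain ⟨δ₂, hδ₂pos, hδ₂⟩ := Metric.eventually_nhds_iff.1 hgmax
  set b : ℝ := min δ₁ (min ε δ₂) / 2 with hb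
  have hbpos : 0 < b := by positivity
  have hbδ₁ : b < δ₁ := by
    have := min_le_left δ₁ (min ε δ₂); simp only [hb]; linarith
  have hbε : b < ε := by
    have h1 := min_le_right δ₁ (min ε δ₂); have h2 := min_le_left ε δ₂
    simp only [hb]; linarith
  have hbδ₂ : b < δ₂ := by
    have h1 := min_le_right δ₁ (min ε δ₂); have h2 := min_le_right ε δ₂
    simp only [hb]; linarith
  have hIccs' : Set.Icc (0:ℝ) b ⊆ s' := by
    intro t ht
    apply hε
    rw [Metric.mem_ball, Real.dist_eq, sub_zero, abs_of_nonneg ht.1]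
    linarith [ht.2]
  have hgcont : ContinuousOn g (Set.Icc 0 b) := by
    apply (hu.continuousOn.comp hcc.continuousOn)
    intro t ht
    exact hIccs' ht
  have hmono : StrictMonoOn g (Set.Icc 0 b) := by
    apply strictMonoOn_of_deriv_pos (convex_Icc 0 b) hgcont
    intro t ht
    rw [interior_Icc] at ht
    have ht' : t ∈ s' := hIccs' ⟨le_of_lt ht.1, le_of_lt ht.2⟩
    rw [(hgd t ht').deriv]
    exact hδ₁ t ⟨ht.1, lt_trans ht.2 hbδ₁⟩
  have hlt : g 0 < g b := hmono (Set.left_mem_Icc.2 (le_of_lt hbpos))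
    (Set.right_mem_Icc.2 (le_of_lt hbpos)) hbpos
  have hle : g b ≤ g 0 := by
    apply hδ₂
    rw [Real.dist_eq, sub_zero, abs_of_pos hbpos]
    exact hbδ₂
  linarith

end maxtest
end Aux
/-- Classical comparison principle on a bounded open (not
necessarily convex) set: if `v` is convex in `Ω` (for a `C²` function this
means its Hessian is positive semidefinite pointwise in `Ω`),
`det D²v > det D²w` in `Ω`, and `v ≤ w` on `∂Ω`, then `v ≤ w` on `closure Ω`. -/
theorem stmt_15 (n : ℕ) (hn : 1 ≤ n)
    (Ω : Set (EuclideanSpace ℝ (Fin n)))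
    (hΩo : IsOpen Ω) (hΩb : Bornology.IsBounded Ω)
    (v w : EuclideanSpace ℝ (Fin n) → ℝ)
    (hvc : ContinuousOn v (closure Ω)) (hwc : ContinuousOn w (closure Ω))
    (hv2 : ContDiffOn ℝ 2 v Ω) (hw2 : ContDiffOn ℝ 2 w Ω)
    (hvconv : ∀ x ∈ Ω, (hessianMatrix v x).PosSemidef)
    (hdet : ∀ x ∈ Ω, hessianDet w x < hessianDet v x)
    (hbd : ∀ x ∈ frontier Ω, v x ≤ w x) :
    ∀ x ∈ closure Ω, v x ≤ w x := by
  intro x hx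
  set F : EuclideanSpace ℝ (Fin n) → ℝ := fun y => v y - w y with hF
  have hFc : ContinuousOn F (closure Ω) := hvc.sub hwc
  have hcpt : IsCompact (closure Ω) := hΩb.isCompact_closure
  obtain ⟨x₀, hx₀mem, hx₀max⟩ := hcpt.exists_isMaxOn ⟨x, hx⟩ hFc
  by_cases hx₀ : x₀ ∈ Ω
  · exfalso
    -- second derivatives
    have hBv : HasFDerivAt (fderiv ℝ v) (fderiv ℝ (fun z => fderiv ℝ v z) x₀) x₀ :=
      hasFDerivAt_fderiv_of_c2 hΩo hv2 hx₀
    have hBw : HasFDerivAt (fderiv ℝ w) (fderiv ℝ (fun z => fderiv ℝ w z) x₀) x₀ :=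
      hasFDerivAt_fderiv_of_c2 hΩo hw2 hx₀
    set Bv := fderiv ℝ (fun z => fderiv ℝ v z) x₀ with hBvdef
    set Bw := fderiv ℝ (fun z => fderiv ℝ w z) x₀ with hBwdef
    have hF2 : ContDiffOn ℝ 2 F Ω := hv2.sub hw2
    have hFmax : IsMaxOn F Ω x₀ := fun y hy => hx₀max (subset_closure hy)
    have hquadF : ∀ e : EuclideanSpace ℝ (Fin n),
        fderiv ℝ (fun z => fderiv ℝ F z) x₀ e e ≤ 0 :=
      fun e => quad_nonpos_of_isMaxOn hΩo hF2 hx₀ hFmax e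
    -- identify fderiv (fderiv F) with Bv - Bw
    have hfd : (fun y => fderiv ℝ F y) =ᶠ[nhds x₀]
        (fun y => fderiv ℝ v y - fderiv ℝ w y) := by
      filter_upwards [hΩo.mem_nhds hx₀] with y hy
      exact fderiv_sub
        ((hv2.differentiableOn (by norm_num) y hy).differentiableAt (hΩo.mem_nhds hy))
        ((hw2.differentiableOn (by norm_num) y hy).differentiableAt (hΩo.mem_nhds hy))
    have hBF : fderiv ℝ (fun z => fderiv ℝ F z) x₀ = Bv - Bw := by
      rw [hfd.fderiv_eq]
      exact fderiv_sub hBv.differentiableAt hBw.differentiableAt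
    have hquad : ∀ e : EuclideanSpace ℝ (Fin n), Bv e e ≤ Bw e e := by
      intro e
      have := hquadF e
      rw [hBF] at this
      simp only [ContinuousLinearMap.sub_apply, ContinuousLinearMap.coe_sub', Pi.sub_apply] at this
      linarith
    -- matrices
    set A := hessianMatrix v x₀ with hA
    set W := hessianMatrix w x₀ with hW
    have hApsd : A.PosSemidef := hvconv x₀ hx₀
    -- symmetry of Bw
    have hWsymm : ∀ e₁ e₂, Bw e₁ e₂ = Bw e₂ e₁ := by
      intro e₁ e₂
      refine second_derivative_symmetric_of_eventually (f := w) ?_ hBw e₁ e₂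
      filter_upwards [hΩo.mem_nhds hx₀] with y hy
      exact hasFDerivAt_of_c2 hΩo hw2 hy
    have hquadA : ∀ e : EuclideanSpace ℝ (Fin n),
        dotProduct (fun i => e i) (A *ᵥ (fun i => e i)) = Bv e e :=
      fun e => quad_eq hBv e
    have hquadW : ∀ e : EuclideanSpace ℝ (Fin n),
        dotProduct (fun i => e i) (W *ᵥ (fun i => e i)) = Bw e e :=
      fun e => quad_eq hBw e
    set C := W - A with hC
    have hCpsd : C.PosSemidef := by
      apply Matrix.PosSemidef.of_dotProduct_mulVec_nonneg
      · have hAH : A.IsHermitian := hApsd.isHermitian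
        have hWH : W.IsHermitian := by
          ext i j
          simp only [Matrix.conjTranspose_apply, RCLike.star_def, starRingEnd_apply, star_trivial]
          rw [hW, hessian_entry hBw, hessian_entry hBw, hWsymm]
        exact hWH.sub hAH
      · intro xv
        have hstar : star xv = xv := rfl
        set e : EuclideanSpace ℝ (Fin n) := (WithLp.equiv 2 (Fin n → ℝ)).symm xv with he
        have hxe : xv = fun i => e i := rfl
        rw [hstar, hC, Matrix.sub_mulVec, dotProduct_sub, hxe, hquadA, hquadW]
        have := hquad e
        linarith
    have hdetle : A.det ≤ W.det := by
      have := det_le_det_add hApsd hCpsd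
      rwa [hC, add_sub_cancel] at this
    have hlt := hdet x₀ hx₀
    unfold hessianDet at hlt
    rw [← hA, ← hW] at hlt
    linarith
  · have hfr : x₀ ∈ frontier Ω := by
      rw [hΩo.frontier_eq]
      exact ⟨hx₀mem, hx₀⟩
    have h1 : F x ≤ F x₀ := hx₀max hx
    have h2 : F x₀ ≤ 0 := sub_nonpos.2 (hbd x₀ hfr)
    have h3 : v x - w x ≤ 0 := le_trans h1 h2
    linarith
end
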